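/- For every ρ ∈ (0,1] and every M > 0, the convergence χ_{ε,ρ} → (u ↦ u^ρ/ρ²) as ε → 0⁺ is uniform on [0,M]: sup_{u ∈ [0,M]} |χ_{ε,ρ}(u) − u^ρ/ρ²| tends to 0 as ε → 0⁺. -/

import Mathlib

open MeasureTheory Filter

/-- The Guenancia–Păun regularizing function. -/
noncomputable def chi (ε ρ u : ℝ) : ℝ :=
  (1 / ρ) * ∫ r in (0 : ℝ)..u, ((ε ^ 2 + r) ^ ρ - ε ^ (2 * ρ)) / r

/-- Subadditivity of `x ↦ x^ρ` for `0 ≤ ρ ≤ 1` on nonnegative reals. -/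
lemma add_rpow_le_rpow_add_aux {a b ρ : ℝ} (ha : 0 ≤ a) (hb : 0 ≤ b)
    (h0 : 0 ≤ ρ) (h1 : ρ ≤ 1) : (a + b) ^ ρ ≤ a ^ ρ + b ^ ρ := by
  lift a to NNReal using ha
  lift b to NNReal using hb
  have := NNReal.rpow_add_le_add_rpow a b h0 h1
  exact_mod_cast this

/-- `min a b ≤ √(a b)` for nonnegative reals. -/
lemma min_le_sqrt_mul {a b : ℝ} (ha : 0 ≤ a) (hb : 0 ≤ b) :
    min a b ≤ Real.sqrt (a * b) := by
  have h0 : 0 ≤ min a b := le_min ha hb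
  calc min a b = Real.sqrt (min a b * min a b) := (Real.sqrt_mul_self h0).symm
    _ ≤ Real.sqrt (a * b) :=
      Real.sqrt_le_sqrt (mul_le_mul (min_le_left _ _) (min_le_right _ _) h0 ha)

/-- The key uniform bound:
`|χ_{ε,ρ}(u) − u^ρ/ρ²| ≤ (2/ρ²) M^{ρ/2} ε^ρ` on `[0,M]`. -/
lemma chi_sub_bound {ρ M : ℝ} (hρ0 : 0 < ρ) (hρ1 : ρ ≤ 1) (hM : 0 < M)
    {ε : ℝ} (hε : 0 < ε) {u : ℝ} (hu0 : 0 ≤ u) (huM : u ≤ M) :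
    |chi ε ρ u - u ^ ρ / ρ ^ 2| ≤ 2 / ρ ^ 2 * M ^ (ρ / 2) * ε ^ ρ := by
  have hδ : (0 : ℝ) < ε ^ 2 := by positivity
  have hεpow : ε ^ (2 * ρ) = (ε ^ 2) ^ ρ := by
    have := Real.rpow_natCast_mul hε.le 2 ρ
    simpa using this
  set f : ℝ → ℝ := fun r => ((ε ^ 2 + r) ^ ρ - ε ^ (2 * ρ)) / r with hf
  -- pointwise bounds on (0, u]
  have hbound : ∀ r ∈ Set.Ioc (0 : ℝ) u, 0 ≤ f r ∧ f r ≤ r ^ (ρ - 1) ∧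
      |f r - r ^ (ρ - 1)| ≤ ε ^ ρ * r ^ (ρ / 2 - 1) := by
    intro r hr
    obtain ⟨hr0, _⟩ := hr
    have hrρ : r ^ (ρ - 1) = r ^ ρ / r := Real.rpow_sub_one hr0.ne' ρ
    have hlow : (ε ^ 2) ^ ρ ≤ (ε ^ 2 + r) ^ ρ :=
      Real.rpow_le_rpow hδ.le (by linarith) hρ0.le
    have hlow2 : r ^ ρ ≤ (ε ^ 2 + r) ^ ρ :=
      Real.rpow_le_rpow hr0.le (by linarith) hρ0.le
    have hupp : (ε ^ 2 + r) ^ ρ ≤ (ε ^ 2) ^ ρ + r ^ ρ :=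
      add_rpow_le_rpow_add_aux hδ.le hr0.le hρ0.le hρ1
    refine ⟨div_nonneg (by rw [hεpow]; linarith) hr0.le, ?_, ?_⟩
    · rw [hrρ]
      apply div_le_div_of_nonneg_right ?_ hr0.le |>.trans_eq rfl
      rw [hεpow]; linarith
    · have hdiff : f r - r ^ (ρ - 1) = ((ε ^ 2 + r) ^ ρ - (ε ^ 2) ^ ρ - r ^ ρ) / r := by
        rw [hf, hεpow, hrρ]; field_simp
      have hNabs : |(ε ^ 2 + r) ^ ρ - (ε ^ 2) ^ ρ - r ^ ρ| ≤ min ((ε ^ 2) ^ ρ) (r ^ ρ) := by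
        rw [abs_le]
        constructor
        · rcases min_cases ((ε ^ 2) ^ ρ) (r ^ ρ) with ⟨h, _⟩ | ⟨h, _⟩ <;> rw [h] <;> linarith
        · have : 0 ≤ min ((ε ^ 2) ^ ρ) (r ^ ρ) :=
            le_min (Real.rpow_nonneg hδ.le ρ) (Real.rpow_nonneg hr0.le ρ)
          linarith
      have hsqrt : min ((ε ^ 2) ^ ρ) (r ^ ρ) ≤ ε ^ ρ * r ^ (ρ / 2) := by
        refine (min_le_sqrt_mul (Real.rpow_nonneg hδ.le ρ) (Real.rpow_nonneg hr0.le ρ)).trans ?_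
        rw [Real.sqrt_mul (Real.rpow_nonneg hδ.le ρ), Real.sqrt_eq_rpow, Real.sqrt_eq_rpow,
          ← Real.rpow_natCast ε 2, ← Real.rpow_mul hε.le, ← Real.rpow_mul hε.le,
          ← Real.rpow_mul hr0.le]
        norm_num
        rw [show 2 * ρ * (1 / 2) = ρ from by ring, show ρ * (1 / 2) = ρ / 2 from by ring]
      rw [hdiff, abs_div, abs_of_pos hr0]
      calc |(ε ^ 2 + r) ^ ρ - (ε ^ 2) ^ ρ - r ^ ρ| / r ≤ (ε ^ ρ * r ^ (ρ / 2)) / r :=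
            div_le_div_of_nonneg_right (hNabs.trans hsqrt) hr0.le |>.trans_eq rfl
        _ = ε ^ ρ * r ^ (ρ / 2 - 1) := by
            rw [Real.rpow_sub_one hr0.ne' (ρ / 2), mul_div_assoc]
  -- integrability
  have hmeasf : AEStronglyMeasurable f (volume.restrict (Set.uIoc (0:ℝ) u)) := by
    apply Measurable.aestronglyMeasurable
    fun_prop
  have hint1 : IntervalIntegrable (fun r : ℝ => r ^ (ρ - 1)) volume 0 u :=
    intervalIntegral.intervalIntegrable_rpow' (by linarith)
  have hint2 : IntervalIntegrable (fun r : ℝ => ε ^ ρ * r ^ (ρ / 2 - 1)) volume 0 u :=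
    (intervalIntegral.intervalIntegrable_rpow' (by linarith)).const_mul _
  have huIoc : Set.uIoc (0:ℝ) u = Set.Ioc (0:ℝ) u := Set.uIoc_of_le hu0
  have hae : ∀ (P : ℝ → Prop), (∀ r ∈ Set.Ioc (0:ℝ) u, P r) →
      (∀ᵐ t ∂volume.restrict (Set.uIoc (0:ℝ) u), P t) := by
    intro P hP
    rw [huIoc, ae_restrict_iff' measurableSet_Ioc]
    exact Filter.Eventually.of_forall hP
  have hintf : IntervalIntegrable f volume 0 u := by
    refine hint1.mono_fun hmeasf (hae _ ?_)
    intro r hr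
    obtain ⟨h0, h1, _⟩ := hbound r hr
    have hrpow : 0 ≤ r ^ (ρ - 1) := h0.trans h1
    simp only [Real.norm_eq_abs, abs_of_nonneg h0, abs_of_nonneg hrpow]
    exact h1
  -- compute ∫ r^(ρ-1) and the bound integral
  have hIrpow : ∫ r in (0:ℝ)..u, r ^ (ρ - 1) = u ^ ρ / ρ := by
    rw [integral_rpow (Or.inl (by linarith))]
    rw [Real.zero_rpow (by intro h; linarith [(by linarith : ρ - 1 + 1 = ρ)] : ρ - 1 + 1 ≠ 0)]
    ring_nf
  have hIbound : ∫ r in (0:ℝ)..u, ε ^ ρ * r ^ (ρ / 2 - 1) = ε ^ ρ * (u ^ (ρ / 2) / (ρ / 2)) := by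
    rw [intervalIntegral.integral_const_mul, integral_rpow (Or.inl (by linarith)),
      Real.zero_rpow (by intro h; linarith [(by linarith : ρ / 2 - 1 + 1 = ρ / 2)] :
        ρ / 2 - 1 + 1 ≠ 0)]
    ring_nf
  -- main estimate
  have hchi : chi ε ρ u - u ^ ρ / ρ ^ 2 =
      (1 / ρ) * ∫ r in (0:ℝ)..u, (f r - r ^ (ρ - 1)) := by
    rw [intervalIntegral.integral_sub hintf hint1, hIrpow, chi]
    show (1 / ρ) * (∫ r in (0:ℝ)..u, f r) - u ^ ρ / ρ ^ 2 = (1 / ρ) * ((∫ r in (0:ℝ)..u, f r) - u ^ ρ / ρ)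
    ring
  have hnorm : |∫ r in (0:ℝ)..u, (f r - r ^ (ρ - 1))| ≤
      |∫ r in (0:ℝ)..u, ε ^ ρ * r ^ (ρ / 2 - 1)| := by
    have := intervalIntegral.norm_integral_le_abs_of_norm_le
      (f := fun r => f r - r ^ (ρ - 1)) (g := fun r => ε ^ ρ * r ^ (ρ / 2 - 1))
      (μ := volume) (a := (0:ℝ)) (b := u)
      (hae _ (fun r hr => (hbound r hr).2.2)) hint2
    simpa using this
  have hb2 : |∫ r in (0:ℝ)..u, ε ^ ρ * r ^ (ρ / 2 - 1)| ≤ ε ^ ρ * (M ^ (ρ / 2) / (ρ / 2)) := by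
    rw [hIbound, abs_of_nonneg (by positivity)]
    have : u ^ (ρ / 2) ≤ M ^ (ρ / 2) := Real.rpow_le_rpow hu0 huM (by linarith)
    have hε' : (0:ℝ) ≤ ε ^ ρ := Real.rpow_nonneg hε.le ρ
    apply mul_le_mul_of_nonneg_left _ hε'
    apply div_le_div_of_nonneg_right this (by linarith : (0:ℝ) ≤ ρ / 2) |>.trans_eq rfl
  calc |chi ε ρ u - u ^ ρ / ρ ^ 2|
      = (1 / ρ) * |∫ r in (0:ℝ)..u, (f r - r ^ (ρ - 1))| := by
        rw [hchi, abs_mul, abs_of_pos (by positivity : (0:ℝ) < 1 / ρ)]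
    _ ≤ (1 / ρ) * (ε ^ ρ * (M ^ (ρ / 2) / (ρ / 2))) := by
        apply mul_le_mul_of_nonneg_left (hnorm.trans hb2) (by positivity)
    _ = 2 / ρ ^ 2 * M ^ (ρ / 2) * ε ^ ρ := by field_simp

/-- For every `ρ ∈ (0,1]` and every `M > 0`, the convergence
`χ_{ε,ρ} → (u ↦ u^ρ/ρ²)` as `ε → 0⁺` is uniform on `[0,M]`: the supremum
`sup_{u ∈ [0,M]} |χ_{ε,ρ}(u) − u^ρ/ρ²|` tends to `0` as `ε → 0⁺`. -/
theorem chi_tendstoUniformlyOn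
    (ρ M : ℝ) (hρ0 : 0 < ρ) (hρ1 : ρ ≤ 1) (hM : 0 < M) :
    Tendsto
      (fun ε : ℝ => ⨆ u : Set.Icc (0 : ℝ) M, |chi ε ρ u - (u : ℝ) ^ ρ / ρ ^ 2|)
      (nhdsWithin 0 (Set.Ioi 0)) (nhds 0) := by
  have hC : (0:ℝ) ≤ 2 / ρ ^ 2 * M ^ (ρ / 2) := by positivity
  haveI : Nonempty (Set.Icc (0:ℝ) M) := ⟨⟨0, le_refl 0, hM.le⟩⟩
  have hupper : ∀ ε ∈ Set.Ioi (0:ℝ),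
      (⨆ u : Set.Icc (0 : ℝ) M, |chi ε ρ u - (u : ℝ) ^ ρ / ρ ^ 2|) ≤
        2 / ρ ^ 2 * M ^ (ρ / 2) * ε ^ ρ := by
    intro ε hε
    apply ciSup_le
    intro u
    exact chi_sub_bound hρ0 hρ1 hM hε u.2.1 u.2.2
  have htendsto : Tendsto (fun ε : ℝ => 2 / ρ ^ 2 * M ^ (ρ / 2) * ε ^ ρ)
      (nhdsWithin 0 (Set.Ioi 0)) (nhds 0) := by
    have h1 : Tendsto (fun ε : ℝ => ε ^ ρ) (nhdsWithin 0 (Set.Ioi 0)) (nhds 0) := by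
      have := (Real.continuousAt_rpow_const 0 ρ (Or.inr hρ0.le)).continuousWithinAt
        (s := Set.Ioi (0:ℝ))
      simpa [ContinuousWithinAt, Real.zero_rpow hρ0.ne'] using this
    simpa using h1.const_mul (2 / ρ ^ 2 * M ^ (ρ / 2))
  apply squeeze_zero' ?_ (Filter.eventually_iff_exists_mem.mpr
    ⟨Set.Ioi 0, self_mem_nhdsWithin, hupper⟩) htendsto
  exact Filter.Eventually.of_forall (fun ε => Real.iSup_nonneg (fun u => abs_nonneg _))
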